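/- For all α ≥ 0, d, k ≥ 1, K ≥ 1 and M ≥ 0, there exists a constant c = c(α,k,d,K,M) ≥ 1 such that for every set A ⊆ ℝ^k and every (K,M)-quasi-isometric embedding f : A → ℝ^d, the counting measures satisfy C^{α}(A) ≤ c · C^{α}(f(A)) and C^{α}(f(A)) ≤ c · C^{α}(A) (as elements of [0,∞]). In particular, A is α-counting regular if and only if f(A) is α-counting regular, and cdim(A) = cdim(f(A)). -/

import Mathlib

open Set MeasureTheory Filter
open scoped ENNReal NNReal

noncomputable section

variable {ι : Type*} [Fintype ι]

/-- A (half-open) cube in `ℝ^ι` based at `a` with side length `s`. -/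
def cube (a : EuclideanSpace ℝ ι) (s : ℝ) : Set (EuclideanSpace ℝ ι) :=
  {x | ∀ i, a i ≤ x i ∧ x i < a i + s}

/-- Coordinatewise floor map. -/
def floorPt (x : EuclideanSpace ℝ ι) : EuclideanSpace ℝ ι := WithLp.toLp 2 (fun i => (⌊x i⌋ : ℝ))

/-- `⌊A⌋`, the image of `A` under the coordinatewise floor map. -/
def floorSet (A : Set (EuclideanSpace ℝ ι)) : Set (EuclideanSpace ℝ ι) := floorPt '' A

/-- The α-counting measure of `A`. -/
def countMeas (α : ℝ) (A : Set (EuclideanSpace ℝ ι)) : ℝ≥0∞ :=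
  ⨅ ℓ : ℝ, ⨆ (a : EuclideanSpace ℝ ι) (s : ℝ) (_ : ℓ ≤ s ∧ 0 < s),
    ((floorSet A ∩ cube a s).encard : ℝ≥0∞) / ENNReal.ofReal (s ^ α)

/-- The counting dimension of `A`. -/
def cdim (A : Set (EuclideanSpace ℝ ι)) : ℝ :=
  sInf {α : ℝ | 0 ≤ α ∧ countMeas α A = 0}

/-- The centered cube `[-ℓ, ℓ)^ι`. -/
def centeredCube (ℓ : ℝ) : Set (EuclideanSpace ℝ ι) :=
  cube (WithLp.toLp 2 (fun _ => -ℓ) : EuclideanSpace ℝ ι) (2 * ℓ)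

/-- The α-mass measure of `A`. -/
def massMeas (α : ℝ) (A : Set (EuclideanSpace ℝ ι)) : ℝ≥0∞ :=
  ⨅ L : ℝ, ⨆ (ℓ : ℝ) (_ : L ≤ ℓ ∧ 0 < ℓ),
    ((floorSet A ∩ centeredCube ℓ).encard : ℝ≥0∞) / ENNReal.ofReal ((2 * ℓ) ^ α)

/-- The (upper) mass dimension of `A`. -/
def mdim (A : Set (EuclideanSpace ℝ ι)) : ℝ :=
  sInf {α : ℝ | 0 ≤ α ∧ massMeas α A = 0}


/-- `f` is a `(K,M)`-quasi-isometric embedding of `B` (with the Euclidean metrics). -/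
def QIEOn {ι κ : Type*} [Fintype ι] [Fintype κ] (K M : ℝ) (B : Set (EuclideanSpace ℝ ι))
    (f : EuclideanSpace ℝ ι → EuclideanSpace ℝ κ) : Prop :=
  ∀ x₁ ∈ B, ∀ x₂ ∈ B,
    (1 / K) * dist x₁ x₂ - M ≤ dist (f x₁) (f x₂) ∧ dist (f x₁) (f x₂) ≤ K * dist x₁ x₂ + M

lemma coord_abs_le_dist (x y : EuclideanSpace ℝ ι) (i : ι) : |x i - y i| ≤ dist x y := by
  rw [EuclideanSpace.dist_eq]
  have h1 : |x i - y i| = Real.sqrt (dist (x i) (y i) ^ 2) := by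
    rw [Real.sqrt_sq dist_nonneg, Real.dist_eq]
  rw [h1]
  apply Real.sqrt_le_sqrt
  exact Finset.single_le_sum (f := fun j => dist (x j) (y j) ^ 2)
    (fun j _ => sq_nonneg _) (Finset.mem_univ i)

lemma dist_le_card_mul (x y : EuclideanSpace ℝ ι) (r : ℝ) (hr : 0 ≤ r)
    (h : ∀ i, |x i - y i| ≤ r) : dist x y ≤ (Fintype.card ι) * r := by
  have hcard : (0:ℝ) ≤ Fintype.card ι := Nat.cast_nonneg _
  have hsq : (Fintype.card ι : ℝ) ≤ (Fintype.card ι : ℝ) ^ 2 := by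
    rcases Nat.eq_zero_or_pos (Fintype.card ι) with h0 | h1
    · simp [h0]
    · have : (1:ℝ) ≤ Fintype.card ι := by exact_mod_cast h1
      nlinarith
  rw [EuclideanSpace.dist_eq]
  have h2 : ∑ i : ι, dist (x i) (y i) ^ 2 ≤ ((Fintype.card ι) * r) ^ 2 := by
    calc ∑ i : ι, dist (x i) (y i) ^ 2 ≤ ∑ _i : ι, r ^ 2 := by
          apply Finset.sum_le_sum
          intro i _
          have hi := h i
          rw [Real.dist_eq]
          exact pow_le_pow_left₀ (abs_nonneg _) hi 2
      _ = (Fintype.card ι) * r ^ 2 := by simp [Finset.sum_const, nsmul_eq_mul]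
      _ ≤ ((Fintype.card ι) * r) ^ 2 := by
          rw [mul_pow]
          exact mul_le_mul_of_nonneg_right hsq (sq_nonneg r)
  calc Real.sqrt (∑ i : ι, dist (x i) (y i) ^ 2) ≤ Real.sqrt (((Fintype.card ι) * r) ^ 2) :=
        Real.sqrt_le_sqrt h2
    _ = (Fintype.card ι) * r := Real.sqrt_sq (by positivity)

lemma encard_intpts_cube (S : Set (EuclideanSpace ℝ ι)) (a : EuclideanSpace ℝ ι) (s : ℝ)
    (hint : ∀ x ∈ S, ∀ i, x i = (⌊x i⌋ : ℝ)) (hsub : S ⊆ cube a s) :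
    S.encard ≤ ((⌊s⌋ + 1).toNat ^ (Fintype.card ι) : ℕ) := by
  classical
  set φ : EuclideanSpace ℝ ι → (ι → ℤ) := fun x i => ⌊x i⌋ with hφ
  have hinj : InjOn φ S := by
    intro x hx y hy hxy
    ext i
    rw [hint x hx i, hint y hy i]
    exact_mod_cast congrFun hxy i
  set T : Finset (ι → ℤ) := Fintype.piFinset fun i => Finset.Icc ⌈a i⌉ (⌈a i⌉ + ⌊s⌋) with hT
  have himg : φ '' S ⊆ ↑T := by
    rintro _ ⟨x, hx, rfl⟩
    simp only [hT, hφ, Finset.coe_sort_coe, Finset.mem_coe, Fintype.mem_piFinset, Finset.mem_Icc]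
    intro i
    obtain ⟨h1, h2⟩ := hsub hx i
    constructor
    · exact Int.ceil_le.mpr (by rw [← hint x hx i]; exact h1)
    · have hlt : ((⌊x i⌋ : ℝ)) < (⌈a i⌉ : ℝ) + s := by
        rw [← hint x hx i]
        exact lt_of_lt_of_le h2 (by linarith [Int.le_ceil (a i)])
      have : (⌊x i⌋ - ⌈a i⌉ : ℤ) ≤ ⌊s⌋ := Int.le_floor.mpr (by push_cast; linarith)
      omega
  have hcardT : T.card = (⌊s⌋ + 1).toNat ^ (Fintype.card ι) := by
    rw [hT, Fintype.card_piFinset]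
    simp only [Int.card_Icc]
    have : ∀ i : ι, (⌈a i⌉ + ⌊s⌋ + 1 - ⌈a i⌉).toNat = (⌊s⌋ + 1).toNat := fun i => by omega
    simp [this, Finset.prod_const]
  calc S.encard = (φ '' S).encard := (hinj.encard_image).symm
    _ ≤ (↑T : Set (ι → ℤ)).encard := encard_le_encard himg
    _ = (T.card : ℕ∞) := by rw [encard_coe_eq_coe_finsetCard]
    _ = _ := by rw [hcardT]

lemma encard_le_mul {β γ : Type*} (g : β → γ) (s : Set β) (t : Set γ) (m : ℕ)
    (himg : g '' s ⊆ t) (hfib : ∀ y, (s ∩ g ⁻¹' {y}).encard ≤ m) :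
    s.encard ≤ t.encard * m := by
  classical
  rcases s.eq_empty_or_nonempty with rfl | ⟨x0, hx0⟩
  · simp
  have hm : m ≠ 0 := by
    intro h
    have h1 := hfib (g x0)
    rw [h, Nat.cast_zero, nonpos_iff_eq_zero, Set.encard_eq_zero] at h1
    exact absurd h1 (Set.nonempty_iff_ne_empty.mp ⟨x0, hx0, rfl⟩)
  by_cases htfin : t.Finite
  · have hfibfin : ∀ y, (s ∩ g ⁻¹' {y}).Finite := fun y =>
      Set.encard_lt_top_iff.mp (lt_of_le_of_lt (hfib y) (by exact_mod_cast WithTop.coe_lt_top m))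
    have hcover : s ⊆ ⋃ y ∈ t, s ∩ g ⁻¹' {y} := fun x hx =>
      Set.mem_biUnion (himg ⟨x, hx, rfl⟩) ⟨hx, rfl⟩
    have hsfin : s.Finite := (htfin.biUnion fun y _ => hfibfin y).subset hcover
    have hsub : hsfin.toFinset ⊆ htfin.toFinset.biUnion fun y => (hfibfin y).toFinset := by
      intro x hx
      rw [Set.Finite.mem_toFinset] at hx
      rw [Finset.mem_biUnion]
      exact ⟨g x, htfin.mem_toFinset.mpr (himg ⟨x, hx, rfl⟩),
        (hfibfin _).mem_toFinset.mpr ⟨hx, rfl⟩⟩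
    have hcard : hsfin.toFinset.card ≤ htfin.toFinset.card * m := by
      refine le_trans (Finset.card_le_card hsub) ?_
      apply Finset.card_biUnion_le_card_mul
      intro y _
      have := hfib y
      rw [(hfibfin y).encard_eq_coe_toFinset_card] at this
      exact_mod_cast this
    rw [hsfin.encard_eq_coe_toFinset_card, htfin.encard_eq_coe_toFinset_card,
      ← Nat.cast_mul, Nat.cast_le]
    exact hcard
  · rw [Set.Infinite.encard_eq htfin, ENat.top_mul (by exact_mod_cast hm)]
    exact le_top

lemma mem_floorSet_int {A : Set (EuclideanSpace ℝ ι)} {z : EuclideanSpace ℝ ι}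
    (hz : z ∈ floorSet A) : ∀ i, z i = (⌊z i⌋ : ℝ) := by
  obtain ⟨w, _, rfl⟩ := hz
  intro i
  show (⌊w i⌋ : ℝ) = (⌊((⌊w i⌋ : ℝ))⌋ : ℝ)
  rw [Int.floor_intCast]

/-- The core counting estimate. -/
lemma core_count {κ : Type*} [Fintype κ] (K M : ℝ) (hK : 1 ≤ K) (hM : 0 ≤ M)
    (A : Set (EuclideanSpace ℝ ι)) (B : Set (EuclideanSpace ℝ κ))
    (Φ : EuclideanSpace ℝ ι → EuclideanSpace ℝ κ)
    (hup : ∀ x₁ ∈ A, ∀ x₂ ∈ A, dist (Φ x₁) (Φ x₂) ≤ K * dist x₁ x₂ + M)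
    (hlow : ∀ x₁ ∈ A, ∀ x₂ ∈ A, dist x₁ x₂ ≤ K * dist (Φ x₁) (Φ x₂) + M)
    (hsurj : ∀ y ∈ B, ∃ x ∈ A, dist (Φ x) y ≤ M)
    (b : EuclideanSpace ℝ κ) (s : ℝ) (hs : 1 ≤ s) :
    ∃ a' : EuclideanSpace ℝ ι, (floorSet B ∩ cube b s).encard ≤
      (floorSet A ∩ cube a'
        ((2 * (3 * K * (Fintype.card κ) + 2 * K * M + M) + 3) * s)).encard *
      ((⌊2 * (K * (Fintype.card ι) + 3 * M + 2) + 1⌋ + 1).toNat ^ (Fintype.card κ)) := by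
  classical
  set k₀ : ℝ := (Fintype.card ι : ℝ) with hk₀
  set d₀ : ℝ := (Fintype.card κ : ℝ) with hd₀
  have hk₀0 : 0 ≤ k₀ := Nat.cast_nonneg _
  have hd₀0 : 0 ≤ d₀ := Nat.cast_nonneg _
  set R₁ : ℝ := 3 * K * d₀ + 2 * K * M + M with hR₁
  have hR₁0 : 0 ≤ R₁ := by positivity
  set L : ℝ := 2 * R₁ + 3 with hL
  set ρ : ℝ := K * k₀ + 3 * M + 2 with hρ
  have hρ0 : 0 ≤ ρ := by positivity
  set m : ℕ := (⌊2 * ρ + 1⌋ + 1).toNat ^ (Fintype.card κ) with hm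
  set N := floorSet B ∩ cube b s with hN
  have hspos : (0:ℝ) < s := lt_of_lt_of_le one_pos hs
  rcases N.eq_empty_or_nonempty with hNe | ⟨z₀, hz₀⟩
  · exact ⟨0, by rw [hNe]; simp⟩
  -- choice of preimages
  have hch : ∀ z ∈ N, ∃ x, x ∈ A ∧ ∃ w, w ∈ B ∧ floorPt w = z ∧ dist (Φ x) w ≤ M := by
    rintro z ⟨hz1, _⟩
    obtain ⟨w, hwB, hwz⟩ := hz1
    obtain ⟨x, hxA, hxd⟩ := hsurj w hwB
    exact ⟨x, hxA, w, hwB, hwz, hxd⟩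
  choose! x hxA w hwB hwfl hwd using hch
  -- coordinate facts
  have hwz : ∀ z ∈ N, ∀ i, |w z i - z i| < 1 := by
    intro z hz i
    have h1 : (⌊w z i⌋ : ℝ) = z i := by
      have := congrArg (fun v => v i) (hwfl z hz)
      exact this
    rw [abs_sub_lt_iff]
    constructor
    · linarith [Int.lt_floor_add_one (w z i), Int.floor_le (w z i)]
    · linarith [Int.lt_floor_add_one (w z i), Int.floor_le (w z i)]
  -- pairwise estimate
  have hpair : ∀ z ∈ N, ∀ z' ∈ N, dist (x z) (x z') ≤ R₁ * s := by
    intro z hz z' hz'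
    have hw : dist (w z) (w z') ≤ d₀ * (s + 2) := by
      apply dist_le_card_mul _ _ _ (by linarith)
      intro i
      have h1 := hwz z hz i
      have h2 := hwz z' hz' i
      have h3 : |z i - z' i| ≤ s := by
        obtain ⟨ha1, ha2⟩ := hz.2 i
        obtain ⟨hb1, hb2⟩ := hz'.2 i
        rw [abs_sub_le_iff]; constructor <;> linarith
      calc |w z i - w z' i| ≤ |w z i - z i| + |z i - z' i| + |z' i - w z' i| := by
            have := abs_sub_le (w z i) (z i) (w z' i)
            have := abs_sub_le (z i) (z' i) (w z' i)
            rw [abs_sub_comm (z' i) (w z' i)] at *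
            linarith [abs_sub_le (w z i) (z i) (w z' i), abs_sub_le (z i) (z' i) (w z' i),
              abs_sub_comm (w z' i) (z' i)]
        _ ≤ s + 2 := by rw [abs_sub_comm (z' i)]; linarith
    have hΦ : dist (Φ (x z)) (Φ (x z')) ≤ d₀ * (s + 2) + 2 * M := by
      calc dist (Φ (x z)) (Φ (x z')) ≤ dist (Φ (x z)) (w z) + dist (w z) (w z')
            + dist (w z') (Φ (x z')) := dist_triangle4 _ _ _ _
        _ ≤ M + d₀ * (s + 2) + M := by
            have := hwd z hz
            have := hwd z' hz'
            rw [dist_comm (w z') (Φ (x z'))]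
            linarith
        _ = d₀ * (s + 2) + 2 * M := by ring
    have := hlow (x z) (hxA z hz) (x z') (hxA z' hz')
    have hx : dist (x z) (x z') ≤ K * (d₀ * (s + 2) + 2 * M) + M := by
      have hK0 : (0:ℝ) < K := lt_of_lt_of_le one_pos hK
      nlinarith
    calc dist (x z) (x z') ≤ K * (d₀ * (s + 2) + 2 * M) + M := hx
      _ ≤ R₁ * s := by
          have hK0 : (0:ℝ) ≤ K := by linarith
          have e1 : 0 ≤ K * d₀ * (s - 1) := by
            apply mul_nonneg (mul_nonneg hK0 hd₀0); linarith
          have e2 : 0 ≤ K * M * (s - 1) := by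
            apply mul_nonneg (mul_nonneg hK0 hM); linarith
          have e3 : 0 ≤ M * (s - 1) := by apply mul_nonneg hM; linarith
          rw [hR₁]; nlinarith [e1, e2, e3]
  -- the image cube
  set a' : EuclideanSpace ℝ ι := WithLp.toLp 2 (fun i => (⌊x z₀ i⌋ : ℝ) - (R₁ * s + 1)) with ha'
  set g : EuclideanSpace ℝ κ → EuclideanSpace ℝ ι := fun z => floorPt (x z) with hg
  refine ⟨a', ?_⟩
  have hLs : (2 * (3 * K * (Fintype.card κ) + 2 * K * M + M) + 3) * s = L * s := by
    rw [hL, hR₁, hd₀]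
  rw [hLs]
  have himg : g '' N ⊆ floorSet A ∩ cube a' (L * s) := by
    rintro _ ⟨z, hz, rfl⟩
    refine ⟨⟨x z, hxA z hz, rfl⟩, ?_⟩
    intro i
    have hd : |x z i - x z₀ i| ≤ R₁ * s :=
      le_trans (coord_abs_le_dist _ _ i) (hpair z hz z₀ hz₀)
    have hfl1 : (⌊x z i⌋ : ℝ) ≤ x z i := Int.floor_le _
    have hfl2 : x z i < (⌊x z i⌋ : ℝ) + 1 := Int.lt_floor_add_one _
    have hfl3 : (⌊x z₀ i⌋ : ℝ) ≤ x z₀ i := Int.floor_le _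
    have hfl4 : x z₀ i < (⌊x z₀ i⌋ : ℝ) + 1 := Int.lt_floor_add_one _
    have habs := abs_le.mp hd
    constructor
    · show a' i ≤ (⌊x z i⌋ : ℝ)
      rw [ha']
      simp only
      linarith [habs.1]
    · show (⌊x z i⌋ : ℝ) < a' i + L * s
      rw [ha', hL]
      simp only
      nlinarith [habs.2]
  have hfib : ∀ y, (N ∩ g ⁻¹' {y}).encard ≤ m := by
    intro y
    rcases (N ∩ g ⁻¹' {y}).eq_empty_or_nonempty with hF | ⟨z₁, hz₁⟩
    · rw [hF]; simp
    have key : ∀ z ∈ N ∩ g ⁻¹' {y}, ∀ i, |z i - z₁ i| ≤ ρ := by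
      rintro z ⟨hzN, hzy⟩ i
      have hgz : floorPt (x z) = floorPt (x z₁) := by
        rw [show floorPt (x z) = g z from rfl, show floorPt (x z₁) = g z₁ from rfl,
          hzy, hz₁.2]
      have hxcoord : ∀ j, |x z j - x z₁ j| ≤ 1 := by
        intro j
        have h1 : (⌊x z j⌋ : ℤ) = ⌊x z₁ j⌋ := by
          have h0 := congrArg (fun v => v j) hgz
          simp only [floorPt] at h0
          exact_mod_cast h0
        have h2 : (⌊x z j⌋ : ℝ) ≤ x z j := Int.floor_le _
        have h3 : x z j < (⌊x z j⌋ : ℝ) + 1 := Int.lt_floor_add_one _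
        have h4 : (⌊x z₁ j⌋ : ℝ) ≤ x z₁ j := Int.floor_le _
        have h5 : x z₁ j < (⌊x z₁ j⌋ : ℝ) + 1 := Int.lt_floor_add_one _
        have h6 : (⌊x z j⌋ : ℝ) = (⌊x z₁ j⌋ : ℝ) := by exact_mod_cast h1
        rw [abs_sub_le_iff]; constructor <;> linarith
      have hxd : dist (x z) (x z₁) ≤ k₀ * 1 :=
        dist_le_card_mul _ _ 1 zero_le_one hxcoord
      have hΦd : dist (Φ (x z)) (Φ (x z₁)) ≤ K * k₀ + M := by
        have := hup (x z) (hxA z hzN) (x z₁) (hxA z₁ hz₁.1)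
        nlinarith [lt_of_lt_of_le one_pos hK]
      have hwdist : dist (w z) (w z₁) ≤ K * k₀ + 3 * M := by
        calc dist (w z) (w z₁) ≤ dist (w z) (Φ (x z)) + dist (Φ (x z)) (Φ (x z₁))
              + dist (Φ (x z₁)) (w z₁) := dist_triangle4 _ _ _ _
          _ ≤ M + (K * k₀ + M) + M := by
              have h1 := hwd z hzN
              have h2 := hwd z₁ hz₁.1
              rw [dist_comm (w z) (Φ (x z))]
              linarith
          _ ≤ K * k₀ + 3 * M := by linarith
      have hco : |w z i - w z₁ i| ≤ K * k₀ + 3 * M :=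
        le_trans (coord_abs_le_dist _ _ i) hwdist
      have h1 := hwz z hzN i
      have h2 := hwz z₁ hz₁.1 i
      rw [hρ]
      rw [abs_sub_lt_iff] at h1 h2
      rw [abs_sub_le_iff] at hco ⊢
      constructor <;> linarith [hco.1, hco.2, h1.1, h1.2, h2.1, h2.2]
    have hsubF : (N ∩ g ⁻¹' {y}) ⊆ cube (WithLp.toLp 2 (fun i => z₁ i - ρ)) (2 * ρ + 1) := by
      intro z hz i
      have := abs_le.mp (key z hz i)
      constructor
      · show z₁ i - ρ ≤ z i; linarith [this.1]
      · show z i < z₁ i - ρ + (2 * ρ + 1); linarith [this.2]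
    have hintF : ∀ z ∈ N ∩ g ⁻¹' {y}, ∀ i, z i = (⌊z i⌋ : ℝ) := fun z hz =>
      mem_floorSet_int hz.1.1
    calc (N ∩ g ⁻¹' {y}).encard ≤ ((⌊2 * ρ + 1⌋ + 1).toNat ^ (Fintype.card κ) : ℕ) :=
          encard_intpts_cube _ _ _ hintF hsubF
      _ = (m : ℕ∞) := by rw [hm]
  exact encard_le_mul g N (floorSet A ∩ cube a' (L * s)) m himg hfib

lemma countMeas_le_aux {κ : Type*} [Fintype κ] (α : ℝ)
    (B : Set (EuclideanSpace ℝ κ)) (A : Set (EuclideanSpace ℝ ι)) (m : ℕ) (L : ℝ) (hL : 1 ≤ L)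
    (hcount : ∀ (b : EuclideanSpace ℝ κ) (s : ℝ), 1 ≤ s → ∃ a' : EuclideanSpace ℝ ι,
      (floorSet B ∩ cube b s).encard ≤ (floorSet A ∩ cube a' (L * s)).encard * m) :
    countMeas α B ≤ ENNReal.ofReal ((m : ℝ) * L ^ α) * countMeas α A := by
  have hL0 : (0:ℝ) < L := lt_of_lt_of_le one_pos hL
  have hLα : (0:ℝ) < L ^ α := Real.rpow_pos_of_pos hL0 α
  have hc_ne_top : (ENNReal.ofReal ((m : ℝ) * L ^ α)) ≠ ⊤ := ENNReal.ofReal_ne_top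
  have key : ENNReal.ofReal ((m : ℝ) * L ^ α) * countMeas α A =
      ⨅ ℓ' : ℝ, ENNReal.ofReal ((m : ℝ) * L ^ α) *
        ⨆ (a : EuclideanSpace ℝ ι) (s : ℝ) (_ : ℓ' ≤ s ∧ 0 < s),
          ((floorSet A ∩ cube a s).encard : ℝ≥0∞) / ENNReal.ofReal (s ^ α) :=
    ENNReal.mul_iInf (fun h => absurd h hc_ne_top)
  rw [key]
  refine le_iInf fun ℓ' => ?_
  have h1 : countMeas α B ≤ ⨆ (b : EuclideanSpace ℝ κ) (s : ℝ) (_ : max ℓ' 1 ≤ s ∧ 0 < s),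
      ((floorSet B ∩ cube b s).encard : ℝ≥0∞) / ENNReal.ofReal (s ^ α) := iInf_le _ _
  refine h1.trans ?_
  refine iSup_le fun b => iSup_le fun s => iSup_le fun hs => ?_
  obtain ⟨hs1, hspos⟩ := hs
  have hs1' : (1:ℝ) ≤ s := le_trans (le_max_right _ _) hs1
  have hsℓ' : ℓ' ≤ s := le_trans (le_max_left _ _) hs1
  obtain ⟨a', ha'⟩ := hcount b s hs1'
  set t := (floorSet A ∩ cube a' (L * s)).encard with ht
  have hsα : (0:ℝ) < s ^ α := Real.rpow_pos_of_pos hspos α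
  -- the target of the inner sup for A
  have hX : ((t : ℝ≥0∞)) / ENNReal.ofReal ((L * s) ^ α) ≤
      ⨆ (a : EuclideanSpace ℝ ι) (s' : ℝ) (_ : ℓ' ≤ s' ∧ 0 < s'),
        ((floorSet A ∩ cube a s').encard : ℝ≥0∞) / ENNReal.ofReal (s' ^ α) := by
    have h2 : ℓ' ≤ L * s ∧ 0 < L * s :=
      ⟨le_trans hsℓ' (le_mul_of_one_le_left (le_of_lt hspos) hL), mul_pos hL0 hspos⟩
    refine le_trans ?_ (le_iSup _ a')
    refine le_trans ?_ (le_iSup _ (L * s))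
    exact le_iSup_of_le h2 (le_refl _)
  calc ((floorSet B ∩ cube b s).encard : ℝ≥0∞) / ENNReal.ofReal (s ^ α)
      ≤ ((t * m : ℕ∞) : ℝ≥0∞) / ENNReal.ofReal (s ^ α) := by
        apply ENNReal.div_le_div_right
        exact_mod_cast ENat.toENNReal_le.mpr ha'
    _ = (m : ℝ≥0∞) * ((t : ℝ≥0∞) / ENNReal.ofReal (s ^ α)) := by
        rw [ENat.toENNReal_mul, ENat.toENNReal_coe, mul_comm,
          mul_div_assoc]
    _ = ENNReal.ofReal ((m : ℝ) * L ^ α) * ((t : ℝ≥0∞) / ENNReal.ofReal ((L * s) ^ α)) := by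
        rw [ENNReal.ofReal_mul (Nat.cast_nonneg m), ENNReal.ofReal_natCast]
        rw [Real.mul_rpow (le_of_lt hL0) (le_of_lt hspos),
          ENNReal.ofReal_mul (le_of_lt (Real.rpow_pos_of_pos hL0 α))]
        rw [mul_assoc]
        congr 1
        rw [ENNReal.div_eq_inv_mul, ENNReal.div_eq_inv_mul, ← mul_assoc]
        congr 1
        rw [ENNReal.mul_inv (Or.inl (ENNReal.ofReal_pos.mpr hLα).ne') (Or.inl ENNReal.ofReal_ne_top)]
        rw [← mul_assoc, ENNReal.mul_inv_cancel (ENNReal.ofReal_pos.mpr hLα).ne' ENNReal.ofReal_ne_top, one_mul]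
    _ ≤ ENNReal.ofReal ((m : ℝ) * L ^ α) * _ := mul_le_mul_right hX _


/-- One-sided comparison of counting measures via a coarse correspondence. -/
lemma oneSided {ι κ : Type*} [Fintype ι] [Fintype κ] (α K M : ℝ) (hK : 1 ≤ K) (hM : 0 ≤ M) :
    ∃ c : ℝ, 1 ≤ c ∧ ∀ (A : Set (EuclideanSpace ℝ ι)) (B : Set (EuclideanSpace ℝ κ))
      (Φ : EuclideanSpace ℝ ι → EuclideanSpace ℝ κ),
      (∀ x₁ ∈ A, ∀ x₂ ∈ A, dist (Φ x₁) (Φ x₂) ≤ K * dist x₁ x₂ + M) →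
      (∀ x₁ ∈ A, ∀ x₂ ∈ A, dist x₁ x₂ ≤ K * dist (Φ x₁) (Φ x₂) + M) →
      (∀ y ∈ B, ∃ x ∈ A, dist (Φ x) y ≤ M) →
      countMeas α B ≤ ENNReal.ofReal c * countMeas α A := by
  set L : ℝ := 2 * (3 * K * (Fintype.card κ) + 2 * K * M + M) + 3 with hLdef
  set m : ℕ := (⌊2 * (K * (Fintype.card ι) + 3 * M + 2) + 1⌋ + 1).toNat ^ (Fintype.card κ)
    with hmdef
  have hL : 1 ≤ L := by
    rw [hLdef]
    have : (0:ℝ) ≤ 3 * K * (Fintype.card κ) + 2 * K * M + M := by positivity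
    linarith
  refine ⟨max 1 ((m : ℝ) * L ^ α), le_max_left _ _, ?_⟩
  intro A B Φ hup hlow hsurj
  have h1 : countMeas α B ≤ ENNReal.ofReal ((m : ℝ) * L ^ α) * countMeas α A := by
    apply countMeas_le_aux α B A m L hL
    intro b s hs
    exact core_count K M hK hM A B Φ hup hlow hsurj b s hs
  refine h1.trans (mul_le_mul_left (ENNReal.ofReal_le_ofReal (le_max_right _ _)) _)

/-- Two-sided comparison under a quasi-isometric embedding. -/
lemma twoSided (k d : ℕ) (α K M : ℝ) (hK : 1 ≤ K) (hM : 0 ≤ M) :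
    ∃ c : ℝ, 1 ≤ c ∧ ∀ (A : Set (EuclideanSpace ℝ (Fin k)))
      (f : EuclideanSpace ℝ (Fin k) → EuclideanSpace ℝ (Fin d)), QIEOn K M A f →
      countMeas α A ≤ ENNReal.ofReal c * countMeas α (f '' A) ∧
      countMeas α (f '' A) ≤ ENNReal.ofReal c * countMeas α A := by
  classical
  have hK0 : (0:ℝ) < K := lt_of_lt_of_le one_pos hK
  have hKM : 0 ≤ K * M := by positivity
  have hMKM : M ≤ K * M := by nlinarith
  obtain ⟨c₁, hc₁, H₁⟩ := oneSided (ι := Fin k) (κ := Fin d) α K (K * M) hK hKM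
  obtain ⟨c₂, hc₂, H₂⟩ := oneSided (ι := Fin d) (κ := Fin k) α K (K * M) hK hKM
  refine ⟨max c₁ c₂, le_trans hc₁ (le_max_left _ _), ?_⟩
  intro A f hf
  have hmono1 : ENNReal.ofReal c₁ ≤ ENNReal.ofReal (max c₁ c₂) :=
    ENNReal.ofReal_le_ofReal (le_max_left _ _)
  have hmono2 : ENNReal.ofReal c₂ ≤ ENNReal.ofReal (max c₁ c₂) :=
    ENNReal.ofReal_le_ofReal (le_max_right _ _)
  constructor
  · -- countMeas A ≤ c * countMeas (f '' A) : use the coarse inverse g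
    have hg0 : ∀ y : EuclideanSpace ℝ (Fin d), ∃ x : EuclideanSpace ℝ (Fin k),
        y ∈ f '' A → (x ∈ A ∧ f x = y) := by
      intro y
      by_cases h : y ∈ f '' A
      · obtain ⟨x, hx, hfx⟩ := h
        exact ⟨x, fun _ => ⟨hx, hfx⟩⟩
      · exact ⟨0, fun h' => absurd h' h⟩
    choose g hg using hg0
    have hbound : countMeas α A ≤ ENNReal.ofReal c₂ * countMeas α (f '' A) := by
      apply H₂ (f '' A) A g
      · -- upper for g
        intro y₁ hy₁ y₂ hy₂
        obtain ⟨hx₁, hf₁⟩ := hg y₁ hy₁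
        obtain ⟨hx₂, hf₂⟩ := hg y₂ hy₂
        have := (hf (g y₁) hx₁ (g y₂) hx₂).1
        rw [hf₁, hf₂] at this
        have h3 : (1 / K) * dist (g y₁) (g y₂) - M ≤ dist y₁ y₂ := this
        calc dist (g y₁) (g y₂) = K * ((1 / K) * dist (g y₁) (g y₂)) := by
              field_simp
          _ ≤ K * (dist y₁ y₂ + M) := by
              apply mul_le_mul_of_nonneg_left _ (le_of_lt hK0)
              linarith
          _ = K * dist y₁ y₂ + K * M := by ring
      · -- lower for g
        intro y₁ hy₁ y₂ hy₂
        obtain ⟨hx₁, hf₁⟩ := hg y₁ hy₁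
        obtain ⟨hx₂, hf₂⟩ := hg y₂ hy₂
        have := (hf (g y₁) hx₁ (g y₂) hx₂).2
        rw [hf₁, hf₂] at this
        linarith
      · -- coarse surjectivity onto A
        intro x hx
        refine ⟨f x, ⟨x, hx, rfl⟩, ?_⟩
        obtain ⟨hgx, hfgx⟩ := hg (f x) ⟨x, hx, rfl⟩
        have := (hf (g (f x)) hgx x hx).1
        rw [hfgx] at this
        simp only [dist_self] at this
        have h4 : (1 / K) * dist (g (f x)) x ≤ M := by linarith
        calc dist (g (f x)) x = K * ((1 / K) * dist (g (f x)) x) := by field_simp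
          _ ≤ K * M := mul_le_mul_of_nonneg_left h4 (le_of_lt hK0)
    exact hbound.trans (mul_le_mul_left hmono2 _)
  · -- countMeas (f '' A) ≤ c * countMeas A : use f itself
    have hbound : countMeas α (f '' A) ≤ ENNReal.ofReal c₁ * countMeas α A := by
      apply H₁ A (f '' A) f
      · intro x₁ hx₁ x₂ hx₂
        have := (hf x₁ hx₁ x₂ hx₂).2
        linarith
      · intro x₁ hx₁ x₂ hx₂
        have := (hf x₁ hx₁ x₂ hx₂).1
        calc dist x₁ x₂ = K * ((1 / K) * dist x₁ x₂) := by field_simp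
          _ ≤ K * (dist (f x₁) (f x₂) + M) := by
              apply mul_le_mul_of_nonneg_left _ (le_of_lt hK0)
              linarith
          _ = K * dist (f x₁) (f x₂) + K * M := by ring
      · rintro _ ⟨x, hx, rfl⟩
        exact ⟨x, hx, by simp [hKM]⟩
    exact hbound.trans (mul_le_mul_left hmono1 _)

/-- Invariance of the counting measures (up to a multiplicative constant depending only on
`α, k, d, K, M`), of `α`-counting regularity, and of the counting dimension under
`(K,M)`-quasi-isometric embeddings. -/
theorem stmt_7 (k d : ℕ) (hk : 1 ≤ k) (hd : 1 ≤ d) (α K M : ℝ) (hα : 0 ≤ α)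
    (hK : 1 ≤ K) (hM : 0 ≤ M) :
    ∃ c : ℝ, 1 ≤ c ∧ ∀ (A : Set (EuclideanSpace ℝ (Fin k)))
      (f : EuclideanSpace ℝ (Fin k) → EuclideanSpace ℝ (Fin d)), QIEOn K M A f →
      countMeas α A ≤ ENNReal.ofReal c * countMeas α (f '' A) ∧
      countMeas α (f '' A) ≤ ENNReal.ofReal c * countMeas α A ∧
      ((0 < countMeas α A ∧ countMeas α A < ⊤) ↔
        (0 < countMeas α (f '' A) ∧ countMeas α (f '' A) < ⊤)) ∧
      cdim A = cdim (f '' A) := by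
  obtain ⟨c, hc, H⟩ := twoSided k d α K M hK hM
  refine ⟨c, hc, ?_⟩
  intro A f hf
  obtain ⟨h1, h2⟩ := H A f hf
  refine ⟨h1, h2, ?_, ?_⟩
  · constructor
    · rintro ⟨hpos, hfin⟩
      constructor
      · rw [pos_iff_ne_zero]
        intro h0
        rw [h0, mul_zero, le_zero_iff] at h1
        exact hpos.ne' h1
      · exact lt_of_le_of_lt h2 (ENNReal.mul_lt_top ENNReal.ofReal_lt_top hfin)
    · rintro ⟨hpos, hfin⟩
      constructor
      · rw [pos_iff_ne_zero]
        intro h0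
        rw [h0, mul_zero, le_zero_iff] at h2
        exact hpos.ne' h2
      · exact lt_of_le_of_lt h1 (ENNReal.mul_lt_top ENNReal.ofReal_lt_top hfin)
  · have hsets : {β : ℝ | 0 ≤ β ∧ countMeas β A = 0}
        = {β : ℝ | 0 ≤ β ∧ countMeas β (f '' A) = 0} := by
      ext β
      simp only [Set.mem_setOf_eq]
      constructor
      · rintro ⟨hβ, h0⟩
        obtain ⟨cβ, hcβ, Hβ⟩ := twoSided k d β K M hK hM
        obtain ⟨g1, g2⟩ := Hβ A f hf
        rw [h0, mul_zero, le_zero_iff] at g2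
        exact ⟨hβ, g2⟩
      · rintro ⟨hβ, h0⟩
        obtain ⟨cβ, hcβ, Hβ⟩ := twoSided k d β K M hK hM
        obtain ⟨g1, g2⟩ := Hβ A f hf
        rw [h0, mul_zero, le_zero_iff] at g1
        exact ⟨hβ, g1⟩
    rw [cdim, cdim, hsets]

end
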